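/- arXiv:2510.19567 — 2 statements merged into one kernel-verified Lean document; each statement's English description precedes it below -/
import Mathlib

section
/- Let G = (V,E) be a finite, simple, undirected, connected graph, let n ≥ 1, and let S, T ⊆ V be connected vertex sets with |S| = |T| = n. Then there exists a valid plan from S to T whose makespan is at most diam(G) + n − 1, where diam(G) = max_{u,v∈V} dist(u,v). -/
open SimpleGraph

variable {V : Type*}

/-- A vertex set `Q` is connected if the subgraph of `G` induced by `Q` is connected. -/
def ConnSet (G : SimpleGraph V) (Q : Finset V) : Prop :=
  (G.induce (Q : Set V)).Connected

/-- `Q'` is reachable from `Q` in one step: there is a bijection `φ` between the two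
vertex sets moving every agent to an adjacent vertex or keeping it in place,
with no swap conflict. -/
def OneStep (G : SimpleGraph V) (Q Q' : Finset V) : Prop :=
  ∃ φ : {x // x ∈ Q} ≃ {x // x ∈ Q'},
    (∀ v : {x // x ∈ Q}, ((φ v : V) = (v : V)) ∨ G.Adj (v : V) ((φ v : V))) ∧
    ∀ u v : {x // x ∈ Q}, (u : V) ≠ (v : V) →
      ¬(((φ u : V) = (v : V)) ∧ ((φ v : V) = (u : V)))

/-- A valid plan from `S` to `T` with makespan `tstar`: a sequence of vertex sets,
each of size `n` and connected, starting at `S`, ending at `T`, with each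
consecutive pair one-step reachable. -/
def ValidPlan (G : SimpleGraph V) (n : ℕ) (S T : Finset V) (tstar : ℕ)
    (P : ℕ → Finset V) : Prop :=
  P 0 = S ∧ P tstar = T ∧
  (∀ k ≤ tstar, (P k).card = n ∧ ConnSet G (P k)) ∧
  ∀ k < tstar, OneStep G (P k) (P (k + 1))

/-- The diameter of a (finite) graph: the maximum of `dist u v` over all pairs. -/
noncomputable def graphDiam (G : SimpleGraph V) : ℕ :=
  sSup (Set.range fun p : V × V => G.dist p.1 p.2)

section Aux



variable {G : SimpleGraph V}

private def downHom (s : Set V) : G.induce s →g G where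
  toFun := Subtype.val
  map_rel' := fun h => h

private lemma lower_walk {s : Set V} {u v : ↥s} (q : (G.induce s).Walk u v) :
    ∃ p : G.Walk ↑u ↑v, ∀ x ∈ p.support, ∃ y ∈ q.support, (y : V) = x :=
  ⟨q.map (downHom s), by
    intro x hx
    have hx : x ∈ (q.map (downHom s)).support := hx
    rw [Walk.support_map] at hx
    obtain ⟨y, hy, rfl⟩ := List.mem_map.1 hx
    exact ⟨y, hy, rfl⟩⟩

private lemma lift_walk_exists {s A : Set V} (hAs : A ⊆ s) {u v : V} (p : G.Walk u v)
    (hp : ∀ x ∈ p.support, x ∈ A) :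
    ∀ (hu : u ∈ s) (hv : v ∈ s), ∃ q : (G.induce s).Walk ⟨u, hu⟩ ⟨v, hv⟩,
      ∀ x ∈ q.support, (x : V) ∈ A := by
  induction p with
  | nil =>
    intro hu hv
    exact ⟨Walk.nil, by
      intro x hx
      simp only [Walk.support_nil, List.mem_singleton] at hx
      subst hx
      exact hp _ (by simp)⟩
  | @cons a b c h p ih =>
    intro hu hv
    have hbA : b ∈ A := hp b (by simp)
    obtain ⟨q, hq⟩ := ih (fun x hx => hp x (by simp [hx])) (hAs hbA) hv
    refine ⟨Walk.cons (by exact h) q, ?_⟩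
    intro x hx
    change x ∈ _ :: q.support at hx
    rcases List.mem_cons.1 hx with rfl | hx
    · exact hp a (by simp)
    · exact hq x hx

private lemma connSet_to_walks {Q : Finset V} (h : ConnSet G Q) :
    ∀ u ∈ Q, ∀ v ∈ Q, ∃ p : G.Walk u v, ∀ x ∈ p.support, x ∈ Q := by
  intro u hu v hv
  obtain ⟨q⟩ := h.preconnected ⟨u, by simpa using hu⟩ ⟨v, by simpa using hv⟩
  obtain ⟨p, hp⟩ := lower_walk q
  refine ⟨p, fun x hx => ?_⟩
  obtain ⟨y, _, hyx⟩ := hp x hx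
  subst hyx
  simpa using y.2

private lemma connSet_of_walks {Q : Finset V} (hne : Q.Nonempty)
    (h : ∀ u ∈ Q, ∀ v ∈ Q, ∃ p : G.Walk u v, ∀ x ∈ p.support, x ∈ Q) : ConnSet G Q := by
  rw [ConnSet, connected_iff]
  refine ⟨?_, ⟨⟨hne.choose, by simpa using hne.choose_spec⟩⟩⟩
  rintro ⟨u, hu⟩ ⟨v, hv⟩
  obtain ⟨p, hp⟩ := h u (by simpa using hu) v (by simpa using hv)
  obtain ⟨q, -⟩ := lift_walk_exists (le_refl (↑Q : Set V)) p
    (fun x hx => by simpa using hp x hx) hu hv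
  exact ⟨q⟩

private lemma connSet_singleton (v : V) : ConnSet G {v} := by
  apply connSet_of_walks ⟨v, by simp⟩
  intro u hu w hw
  simp only [Finset.mem_singleton] at hu hw
  subst hu; subst hw
  exact ⟨Walk.nil, by simp⟩

private lemma connSet_insert [DecidableEq V] {Q : Finset V} (hQ : ConnSet G Q) {q v : V}
    (hq : q ∈ Q) (hadj : G.Adj q v) : ConnSet G (insert v Q) := by
  apply connSet_of_walks ⟨q, by simp [hq]⟩
  have base : ∀ w ∈ Q, ∃ p : G.Walk v w, ∀ x ∈ p.support, x ∈ insert v Q := by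
    intro w hw
    obtain ⟨p, hp⟩ := connSet_to_walks hQ q hq w hw
    refine ⟨Walk.cons hadj.symm p, ?_⟩
    intro x hx
    rw [Walk.support_cons] at hx
    rcases List.mem_cons.1 hx with rfl | hx
    · exact Finset.mem_insert_self _ _
    · exact Finset.mem_insert_of_mem (hp x hx)
  have base2 : ∀ w ∈ insert v Q, ∃ p : G.Walk v w, ∀ x ∈ p.support, x ∈ insert v Q := by
    intro w hw
    rcases Finset.mem_insert.1 hw with hwv | hw
    · subst hwv
      exact ⟨Walk.nil, by simp⟩
    · exact base w hw
  intro x hx y hy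
  obtain ⟨p1, hp1⟩ := base2 x hx
  obtain ⟨p2, hp2⟩ := base2 y hy
  refine ⟨p1.reverse.append p2, ?_⟩
  intro z hz
  rcases (Walk.mem_support_append_iff _ _).1 hz with h | h
  · rw [Walk.support_reverse, List.mem_reverse] at h
    exact hp1 z h
  · exact hp2 z h

private lemma exists_noncut {W : Type*} [Fintype W] {H : SimpleGraph W} (hH : H.Connected)
    {A : Set W} (hA : A.Nonempty) (hne : ∃ w, w ∉ A)
    (hAw : ∀ a ∈ A, ∀ b ∈ A, ∃ p : H.Walk a b, ∀ x ∈ p.support, x ∈ A) :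
    ∃ u, u ∉ A ∧ ∀ x y, x ≠ u → y ≠ u →
      ∃ p : H.Walk x y, ∀ z ∈ p.support, z ≠ u := by
  classical
  set d : W → ℕ := fun x => sInf ((fun a => H.dist x a) '' A) with hd
  have hattain : ∀ x, ∃ a ∈ A, H.dist x a = d x := by
    intro x
    obtain ⟨a, ha, he⟩ := Nat.sInf_mem (hA.image (fun a => H.dist x a))
    exact ⟨a, ha, he⟩
  have hdle : ∀ x, ∀ a ∈ A, d x ≤ H.dist x a := fun x a ha => Nat.sInf_le ⟨a, ha, rfl⟩
  have hdA : ∀ x, d x = 0 → x ∈ A := by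
    intro x h0
    obtain ⟨a, ha, he⟩ := hattain x
    rw [h0] at he
    rwa [(hH.dist_eq_zero_iff).1 he]
  obtain ⟨u, hu, hmax⟩ := Set.exists_max_image {w | w ∉ A} d (Set.toFinite _) hne
  simp only [Set.mem_setOf_eq] at hu hmax
  have key : ∀ (n : ℕ) (x : W), x ≠ u → d x ≤ n →
      ∃ (a : W) (p : H.Walk x a), a ∈ A ∧ ∀ z ∈ p.support, z ≠ u := by
    intro n
    induction n with
    | zero =>
      intro x hxu h0
      exact ⟨x, Walk.nil, hdA x (Nat.le_zero.1 h0), by simpa using hxu⟩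
    | succ n ih =>
      intro x hxu hle
      by_cases hxA : x ∈ A
      · exact ⟨x, Walk.nil, hxA, by simpa using hxu⟩
      · obtain ⟨a, ha, hda⟩ := hattain x
        obtain ⟨p, hp⟩ := (hH x a).exists_walk_length_eq_dist
        have hdx0 : d x ≠ 0 := fun h => hxA (hdA x h)
        cases p with
        | nil =>
          exfalso
          apply hdx0
          rw [← hda]
          simpa using hp.symm
        | @cons _ y _ hadj p' =>
          have e1 : p'.length + 1 = d x := by
            rw [← hda]
            simpa using hp
          have e2 : d y ≤ p'.length := le_trans (hdle y a ha) (SimpleGraph.dist_le p')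
          have hdy : d y ≤ n := by omega
          have hyu : y ≠ u := by
            intro h
            subst h
            have h3 : d x ≤ d y := hmax x hxA
            omega
          obtain ⟨b, pb, hb, hpb⟩ := ih y hyu hdy
          refine ⟨b, Walk.cons hadj pb, hb, ?_⟩
          intro z hz
          rw [Walk.support_cons] at hz
          rcases List.mem_cons.1 hz with rfl | hz
          · exact hxu
          · exact hpb z hz
  refine ⟨u, hu, ?_⟩
  intro x y hx hy
  obtain ⟨a, p1, ha, hp1⟩ := key (d x) x hx le_rfl
  obtain ⟨b, p2, hb, hp2⟩ := key (d y) y hy le_rfl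
  obtain ⟨pm, hpm⟩ := hAw a ha b hb
  refine ⟨p1.append (pm.append p2.reverse), ?_⟩
  intro z hz
  rcases (Walk.mem_support_append_iff _ _).1 hz with h | h
  · exact hp1 z h
  · rcases (Walk.mem_support_append_iff _ _).1 h with h | h
    · exact fun he => hu (he ▸ hpm z h)
    · rw [Walk.support_reverse, List.mem_reverse] at h
      exact hp2 z h


private lemma step_lemma [Fintype V] [DecidableEq V] {Q A : Finset V} {v : V}
    (hQ : ConnSet G Q) (hv : v ∉ Q) (hadj : ∃ q ∈ Q, G.Adj q v)
    (hAsub : A ⊆ insert v Q) (hvA : v ∈ A) (hAconn : ConnSet G A) (hAcard : A.card ≤ Q.card) :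
    ∃ u ∈ Q, u ∉ A ∧ OneStep G Q (insert v (Q.erase u)) ∧
      ConnSet G (insert v (Q.erase u)) ∧ (insert v (Q.erase u)).card = Q.card := by
  classical
  obtain ⟨q0, hq0, hq0v⟩ := hadj
  set R : Finset V := insert v Q with hR
  have hvR : v ∈ R := Finset.mem_insert_self _ _
  have hRconn : ConnSet G R := connSet_insert hQ hq0 hq0v
  have hAR : (↑A : Set V) ⊆ (↑R : Set V) := fun x hx => by
    simpa using hAsub (by simpa using hx)
  have hRcard : Q.card < R.card := by
    rw [hR, Finset.card_insert_of_notMem hv]; omega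
  have hssub : A ⊂ R := by
    refine Finset.ssubset_iff_subset_ne.2 ⟨hAsub, ?_⟩
    intro h
    rw [h] at hAcard
    omega
  obtain ⟨w0, hw0R, hw0A⟩ := Finset.exists_of_ssubset hssub
  set A' : Set ↥(↑R : Set V) := {x | (x : V) ∈ A} with hA'
  have hA'ne : A'.Nonempty := ⟨⟨v, by simpa using hvR⟩, hvA⟩
  have hne' : ∃ w : ↥(↑R : Set V), w ∉ A' := ⟨⟨w0, by simpa using hw0R⟩, hw0A⟩
  have hAw : ∀ a ∈ A', ∀ b ∈ A', ∃ p : (G.induce (↑R : Set V)).Walk a b,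
      ∀ x ∈ p.support, x ∈ A' := by
    rintro ⟨a, haR⟩ haA ⟨b, hbR⟩ hbA
    obtain ⟨p, hp⟩ := connSet_to_walks hAconn a haA b hbA
    obtain ⟨q, hq⟩ := lift_walk_exists hAR p (fun x hx => by simpa using hp x hx) haR hbR
    exact ⟨q, hq⟩
  obtain ⟨u', hu'A, hu'walks⟩ := exists_noncut hRconn hA'ne hne' hAw
  set u : V := ↑u' with huDef
  have huR : u ∈ R := Finset.mem_coe.1 u'.2
  have huA : u ∉ A := hu'A
  have huv : u ≠ v := fun h => huA (h ▸ hvA)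
  have huQ : u ∈ Q := by
    rcases Finset.mem_insert.1 huR with h | h
    · exact absurd h huv
    · exact h
  set Q' : Finset V := insert v (Q.erase u) with hQ'def
  have hQ'mem : ∀ x, x ∈ Q' ↔ (x ∈ R ∧ x ≠ u) := by
    intro x
    simp only [hQ'def, hR, Finset.mem_insert, Finset.mem_erase]
    constructor
    · rintro (rfl | ⟨h1, h2⟩)
      · exact ⟨Or.inl rfl, fun h => huv h.symm⟩
      · exact ⟨Or.inr h2, h1⟩
    · rintro ⟨(rfl | h), hxu⟩
      · exact Or.inl rfl
      · exact Or.inr ⟨hxu, h⟩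
  have hvQ' : v ∈ Q' := Finset.mem_insert_self _ _
  have hQ'card : Q'.card = Q.card := by
    rw [hQ'def, Finset.card_insert_of_notMem (fun h => hv (Finset.mem_of_mem_erase h)),
      Finset.card_erase_of_mem huQ]
    have : 1 ≤ Q.card := Finset.card_pos.2 ⟨u, huQ⟩
    omega
  have hQ'conn : ConnSet G Q' := by
    apply connSet_of_walks ⟨v, hvQ'⟩
    intro x hx y hy
    have hx' := (hQ'mem x).1 hx
    have hy' := (hQ'mem y).1 hy
    have hxR : x ∈ (↑R : Set V) := by simpa using hx'.1
    have hyR : y ∈ (↑R : Set V) := by simpa using hy'.1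
    have hxu' : (⟨x, hxR⟩ : ↥(↑R : Set V)) ≠ u' := fun h => hx'.2 (congrArg Subtype.val h)
    have hyu' : (⟨y, hyR⟩ : ↥(↑R : Set V)) ≠ u' := fun h => hy'.2 (congrArg Subtype.val h)
    obtain ⟨p, hp⟩ := hu'walks ⟨x, hxR⟩ ⟨y, hyR⟩ hxu' hyu'
    obtain ⟨p', hp'⟩ := lower_walk p
    refine ⟨p', ?_⟩
    intro z hz
    obtain ⟨z', hz', rfl⟩ := hp' z hz
    refine (hQ'mem _).2 ⟨by simpa using z'.2, ?_⟩
    exact fun h => (hp z' hz') (Subtype.ext h)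
  -- now build the OneStep using the cyclic shift along a path from u to v inside R
  obtain ⟨w, hw⟩ := connSet_to_walks hRconn u huR v hvR
  set p : G.Walk u v := w.bypass with hpDef
  have hpath : p.IsPath := Walk.bypass_isPath w
  set l : List V := p.support with hlDef
  have hnd : l.Nodup := hpath.support_nodup
  have hmeml : ∀ x ∈ l, x ∈ R := fun x hx => hw x (Walk.support_bypass_subset w hx)
  have hplen : 1 ≤ p.length := by
    rcases Nat.eq_zero_or_pos p.length with h | h
    · exact absurd (Walk.eq_of_length_eq_zero h) huv
    · exact h
  have hlen : 2 ≤ l.length := by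
    rw [hlDef, Walk.length_support]; omega
  have hl0 : ∀ (h : 0 < l.length), l[0]'h = u := by
    intro h
    rw [List.getElem_zero]
    exact p.head_support
  have hlast : l[l.length - 1]'(by omega) = v := by
    rw [← List.getLast_eq_getElem]
    exact p.getLast_support
  have hul : u ∈ l := by
    rw [← hl0 (by omega)]
    exact List.getElem_mem _
  have hvl : v ∈ l := by
    rw [← hlast]
    exact List.getElem_mem _
  have hchain : List.IsChain G.Adj l := p.isChain_adj_support
  have hidxv : ∀ i (hi : i < l.length), (l[i]'hi = v ↔ i = l.length - 1) := by
    intro i hi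
    constructor
    · intro h
      rw [← hlast] at h
      exact (hnd.getElem_inj_iff).1 h
    · rintro rfl
      exact hlast
  have hidxu : ∀ i (hi : i < l.length), (l[i]'hi = u ↔ i = 0) := by
    intro i hi
    constructor
    · intro h
      rw [← hl0 (by omega)] at h
      exact (hnd.getElem_inj_iff).1 h
    · rintro rfl
      exact hl0 _
  have hiff : ∀ a, a ∈ Q ↔ l.formPerm a ∈ Q' := by
    intro a
    by_cases hal : a ∈ l
    · obtain ⟨i, hi, rfl⟩ := List.mem_iff_getElem.1 hal
      rw [List.formPerm_apply_getElem l hnd i hi]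
      by_cases hilast : i = l.length - 1
      · have hav : l[i]'hi = v := (hidxv i hi).2 hilast
        have hmod : (i + 1) % l.length = 0 := by
          have : i + 1 = l.length := by omega
          simp [this]
        refine iff_of_false (fun h => hv (hav ▸ h)) (fun h => ?_)
        simp only [hmod] at h
        rw [hl0] at h
        exact ((hQ'mem u).1 h).2 rfl
      · have hi1 : i + 1 < l.length := by omega
        have hmod : (i + 1) % l.length = i + 1 := Nat.mod_eq_of_lt hi1
        have haQ : l[i]'hi ∈ Q := by
          rcases Finset.mem_insert.1 (hmeml _ (List.getElem_mem hi)) with h | h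
          · exact absurd ((hidxv i hi).1 h) hilast
          · exact h
        have hbQ' : l[i+1]'hi1 ∈ Q' := by
          refine (hQ'mem _).2 ⟨hmeml _ (List.getElem_mem hi1), ?_⟩
          intro h
          exact absurd ((hidxu _ hi1).1 h) (by omega)
        simp only [hmod]
        exact iff_of_true haQ hbQ'
    · rw [List.formPerm_apply_of_notMem hal]
      have hau : a ≠ u := fun h => hal (h ▸ hul)
      have hav : a ≠ v := fun h => hal (h ▸ hvl)
      rw [hQ'mem a, hR]
      simp [Finset.mem_insert, hav, hau]
  refine ⟨u, huQ, huA, ⟨Equiv.subtypeEquiv l.formPerm hiff, ?_, ?_⟩, hQ'conn, hQ'card⟩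
  · rintro ⟨a, ha⟩
    have hcoe : ((Equiv.subtypeEquiv l.formPerm hiff ⟨a, ha⟩ : {x // x ∈ Q'}) : V)
        = l.formPerm a := rfl
    rw [hcoe]
    by_cases hal : a ∈ l
    · obtain ⟨i, hi, rfl⟩ := List.mem_iff_getElem.1 hal
      right
      have hiv : i ≠ l.length - 1 := fun h => hv (((hidxv i hi).2 h) ▸ ha)
      have hi1 : i + 1 < l.length := by omega
      have hmod : (i + 1) % l.length = i + 1 := Nat.mod_eq_of_lt hi1
      rw [List.formPerm_apply_getElem l hnd i hi]
      have hadj := List.isChain_iff_getElem.1 hchain i (by omega)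
      simpa [hmod, List.get_eq_getElem] using hadj
    · left
      rw [List.formPerm_apply_of_notMem hal]
  · rintro ⟨a, ha⟩ ⟨b, hb⟩ hab ⟨h1, h2⟩
    simp only at hab
    have e1 : l.formPerm a = b := h1
    have e2 : l.formPerm b = a := h2
    by_cases hal : a ∈ l
    · obtain ⟨i, hi, rfl⟩ := List.mem_iff_getElem.1 hal
      have hiv : i ≠ l.length - 1 := fun h => hv (((hidxv i hi).2 h) ▸ ha)
      have hi1 : i + 1 < l.length := by omega
      have hmod : (i + 1) % l.length = i + 1 := Nat.mod_eq_of_lt hi1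
      rw [List.formPerm_apply_getElem l hnd i hi] at e1
      have hb' : b = l[i+1]'hi1 := by
        rw [← e1]; simp [hmod]
      have hbv : i + 1 ≠ l.length - 1 := by
        intro h
        exact hv ((hidxv (i+1) hi1).2 h ▸ (hb' ▸ hb))
      have hi2 : i + 2 < l.length := by omega
      rw [hb', List.formPerm_apply_getElem l hnd (i+1) hi1] at e2
      have hmod2 : (i + 1 + 1) % l.length = i + 2 := Nat.mod_eq_of_lt (by omega)
      have : l[i+2]'hi2 = l[i]'hi := by
        rw [← e2]; simp [hmod2]
      have := (hnd.getElem_inj_iff).1 this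
      omega
    · rw [List.formPerm_apply_of_notMem hal] at e1
      exact hab (e1 ▸ rfl)

private def Plannable (G : SimpleGraph V) (n : ℕ) (Q Q' : Finset V) (k : ℕ) : Prop :=
  ∃ P : ℕ → Finset V, ValidPlan G n Q Q' k P

private lemma plannable_refl {G : SimpleGraph V} {n : ℕ} {Q : Finset V}
    (hcard : Q.card = n) (hconn : ConnSet G Q) : Plannable G n Q Q 0 := by
  refine ⟨fun _ => Q, rfl, rfl, ?_, ?_⟩
  · intro k _
    exact ⟨hcard, hconn⟩
  · intro k hk
    omega

private lemma plannable_step {G : SimpleGraph V} {n : ℕ} {Q Q' : Finset V}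
    (hstep : OneStep G Q Q') (hc1 : Q.card = n) (hk1 : ConnSet G Q)
    (hc2 : Q'.card = n) (hk2 : ConnSet G Q') : Plannable G n Q Q' 1 := by
  refine ⟨fun i => if i = 0 then Q else Q', by simp, by simp, ?_, ?_⟩
  · intro k _
    by_cases h : k = 0 <;> simp [h, hc1, hk1, hc2, hk2]
  · intro k hk
    have : k = 0 := by omega
    simpa [this] using hstep

private lemma plannable_trans {G : SimpleGraph V} {n : ℕ} {Q Q' Q'' : Finset V} {k k' : ℕ}
    (h1 : Plannable G n Q Q' k) (h2 : Plannable G n Q' Q'' k') :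
    Plannable G n Q Q'' (k + k') := by
  obtain ⟨P, hP0, hPk, hPcard, hPstep⟩ := h1
  obtain ⟨P', hP'0, hP'k, hP'card, hP'step⟩ := h2
  refine ⟨fun i => if i ≤ k then P i else P' (i - k), ?_, ?_, ?_, ?_⟩
  · simp [hP0]
  · show (if k + k' ≤ k then P (k + k') else P' (k + k' - k)) = Q''
    by_cases h : k + k' ≤ k
    · have hk' : k' = 0 := by omega
      simp only [h, if_pos]
      rw [show k + k' = k by omega, hPk, ← hP'0, ← hP'k, hk']
    · rw [if_neg h, show k + k' - k = k' by omega, hP'k]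
  · intro i hi
    by_cases h : i ≤ k
    · simpa [h] using hPcard i h
    · simpa [h] using hP'card (i - k) (by omega)
  · intro i hi
    have hfact : ∀ j, k ≤ j → (if j ≤ k then P j else P' (j - k)) = P' (j - k) := by
      intro j hj
      by_cases h : j ≤ k
      · have : j = k := by omega
        simp [this, hPk, hP'0]
      · simp [h]
    change OneStep G (if i ≤ k then P i else P' (i - k))
      (if i + 1 ≤ k then P (i + 1) else P' (i + 1 - k))
    by_cases h : i + 1 ≤ k
    · rw [if_pos (show i ≤ k by omega), if_pos h]
      exact hPstep i (by omega)
    · rw [hfact (i+1) (by omega), hfact i (by omega)]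
      have := hP'step (i - k) (by omega)
      rw [show i - k + 1 = i + 1 - k by omega] at this
      exact this

private lemma exists_crossing [DecidableEq V] {G : SimpleGraph V} {T L : Finset V}
    (hT : ConnSet G T) (hL : L ⊆ T) (hLne : L.Nonempty) (hne : L ≠ T) :
    ∃ v ∈ T, v ∉ L ∧ ∃ q ∈ L, G.Adj q v := by
  obtain ⟨a, ha⟩ := hLne
  obtain ⟨b, hbT, hbL⟩ := Finset.exists_of_ssubset (Finset.ssubset_iff_subset_ne.2 ⟨hL, hne⟩)
  obtain ⟨p, hp⟩ := connSet_to_walks hT a (hL ha) b hbT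
  have aux : ∀ (x z : V) (p : G.Walk x z), (∀ w ∈ p.support, w ∈ T) → x ∈ L → z ∉ L →
      ∃ v ∈ T, v ∉ L ∧ ∃ q ∈ L, G.Adj q v := by
    intro x z p
    induction p with
    | nil =>
      intro _ h1 h2
      exact absurd h1 h2
    | @cons x y z hadj q ih =>
      intro hsup hxL hzL
      have hyT : y ∈ T := hsup y (by simp)
      by_cases hyL : y ∈ L
      · exact ih (fun w hw => hsup w (by simp [hw])) hyL hzL
      · exact ⟨y, hyT, hyL, x, hxL, hadj⟩
  exact aux a b p hp ha hbL

private lemma phase2 [Fintype V] [DecidableEq V] {G : SimpleGraph V} {n : ℕ} {T : Finset V}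
    (hT : ConnSet G T) (hTcard : T.card = n) :
    ∀ (m : ℕ) (L : Finset V), L.Nonempty → L ⊆ T → ConnSet G L → T.card - L.card ≤ m →
      ∀ Q : Finset V, ConnSet G Q → Q.card = n → L ⊆ Q →
      ∃ k ≤ m, Plannable G n Q T k := by
  intro m
  induction m with
  | zero =>
    intro L hLne hLT hLconn hLcard Q hQconn hQcard hLQ
    have h1 : L = T := Finset.eq_of_subset_of_card_le hLT (by omega)
    have h2 : L = Q := Finset.eq_of_subset_of_card_le hLQ (by rw [hQcard, ← hTcard, ← h1])
    refine ⟨0, le_rfl, ?_⟩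
    have hQT : Q = T := by rw [← h2, h1]
    rw [hQT]
    exact plannable_refl hTcard hT
  | succ m ih =>
    intro L hLne hLT hLconn hLcard Q hQconn hQcard hLQ
    by_cases hLT' : L = T
    · have h2 : L = Q := Finset.eq_of_subset_of_card_le hLQ
        (by rw [hQcard, ← hTcard, ← hLT'])
      refine ⟨0, by omega, ?_⟩
      have hQT : Q = T := by rw [← h2, hLT']
      rw [hQT]
      exact plannable_refl hTcard hT
    · obtain ⟨v, hvT, hvL, q, hqL, hqv⟩ := exists_crossing hT hLT hLne hLT'
      have hLvconn : ConnSet G (insert v L) := connSet_insert hLconn hqL hqv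
      have hLvT : insert v L ⊆ T := Finset.insert_subset hvT hLT
      have hLvcard : T.card - (insert v L).card ≤ m := by
        rw [Finset.card_insert_of_notMem hvL]
        omega
      by_cases hvQ : v ∈ Q
      · obtain ⟨k, hk, hplan⟩ := ih (insert v L) ⟨v, Finset.mem_insert_self _ _⟩ hLvT hLvconn
          hLvcard Q hQconn hQcard (Finset.insert_subset hvQ hLQ)
        exact ⟨k, by omega, hplan⟩
      · have hadj : ∃ q ∈ Q, G.Adj q v := ⟨q, hLQ hqL, hqv⟩
        have hAsub : insert v L ⊆ insert v Q := Finset.insert_subset_insert _ hLQ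
        have hAcard : (insert v L).card ≤ Q.card := by
          rw [Finset.card_insert_of_notMem hvL, hQcard]
          have : L.card < T.card :=
            Finset.card_lt_card (Finset.ssubset_iff_subset_ne.2 ⟨hLT, hLT'⟩)
          omega
        obtain ⟨u, huQ, huA, hstep, hconn', hcard'⟩ := step_lemma hQconn hvQ hadj hAsub
          (Finset.mem_insert_self _ _) hLvconn hAcard
        have hcard'' : (insert v (Q.erase u)).card = n := by rw [hcard', hQcard]
        have hLQ2 : insert v L ⊆ insert v (Q.erase u) := by
          intro x hx
          rcases Finset.mem_insert.1 hx with hxv | hx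
          · exact hxv ▸ Finset.mem_insert_self _ _
          · refine Finset.mem_insert_of_mem (Finset.mem_erase.2 ⟨?_, hLQ hx⟩)
            exact fun h => huA (h ▸ Finset.mem_insert_of_mem hx)
        obtain ⟨k, hk, hplan⟩ := ih (insert v L) ⟨v, Finset.mem_insert_self _ _⟩ hLvT hLvconn
          hLvcard (insert v (Q.erase u)) hconn' hcard'' hLQ2
        exact ⟨1 + k, by omega,
          plannable_trans (plannable_step hstep hQcard hQconn hcard'' hconn') hplan⟩

private lemma phase1 [Fintype V] [DecidableEq V] {G : SimpleGraph V} (hG : G.Connected)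
    {n : ℕ} (t : V) :
    ∀ (d : ℕ) (Q : Finset V), ConnSet G Q → Q.card = n → ∀ q ∈ Q, G.dist q t ≤ d →
      ∃ k ≤ d, ∃ Q' : Finset V, t ∈ Q' ∧ ConnSet G Q' ∧ Q'.card = n ∧ Plannable G n Q Q' k := by
  intro d
  induction d with
  | zero =>
    intro Q hQconn hQcard q hq hdist
    have hqt : q = t := (hG.dist_eq_zero_iff).1 (Nat.le_zero.1 hdist)
    exact ⟨0, le_rfl, Q, hqt ▸ hq, hQconn, hQcard, plannable_refl hQcard hQconn⟩
  | succ d ih =>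
    intro Q hQconn hQcard q hq hdist
    by_cases htQ : t ∈ Q
    · exact ⟨0, by omega, Q, htQ, hQconn, hQcard, plannable_refl hQcard hQconn⟩
    · have hqt : q ≠ t := fun h => htQ (h ▸ hq)
      obtain ⟨p, hp⟩ := (hG q t).exists_walk_length_eq_dist
      cases p with
      | nil => exact absurd rfl hqt
      | @cons _ y _ hadj p' =>
        have e1 : p'.length + 1 = G.dist q t := by simpa using hp
        have hyd : G.dist y t ≤ d := le_trans (SimpleGraph.dist_le p') (by omega)
        by_cases hyQ : y ∈ Q
        · obtain ⟨k, hk, rest⟩ := ih Q hQconn hQcard y hyQ hyd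
          exact ⟨k, by omega, rest⟩
        · obtain ⟨u, huQ, huA, hstep, hconn', hcard'⟩ := step_lemma hQconn hyQ ⟨q, hq, hadj⟩
            (Finset.singleton_subset_iff.2 (Finset.mem_insert_self _ _))
            (Finset.mem_singleton_self y) (connSet_singleton y)
            (by rw [Finset.card_singleton]; exact Finset.card_pos.2 ⟨q, hq⟩)
          have hcard'' : (insert y (Q.erase u)).card = n := by rw [hcard', hQcard]
          obtain ⟨k, hk, Q'', hr1, hr2, hr3, hplan⟩ := ih (insert y (Q.erase u)) hconn'
            hcard'' y (Finset.mem_insert_self _ _) hyd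
          exact ⟨1 + k, by omega, Q'', hr1, hr2, hr3,
            plannable_trans (plannable_step hstep hQcard hQconn hcard'' hconn') hplan⟩

end Aux

/-- There is always a valid plan from `S` to `T` with makespan at most
`diam(G) + n - 1`. -/
theorem stmt1 [Fintype V] (G : SimpleGraph V) (hG : G.Connected)
    (n : ℕ) (hn : 1 ≤ n) (S T : Finset V)
    (hS : ConnSet G S) (hT : ConnSet G T)
    (hScard : S.card = n) (hTcard : T.card = n) :
    ∃ (tstar : ℕ) (P : ℕ → Finset V),
      ValidPlan G n S T tstar P ∧ tstar ≤ graphDiam G + n - 1 := by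
  classical
  obtain ⟨s, hs⟩ : S.Nonempty := Finset.card_pos.1 (by omega)
  obtain ⟨t, ht⟩ : T.Nonempty := Finset.card_pos.1 (by omega)
  have hdiam : G.dist s t ≤ graphDiam G := by
    apply le_csSup
    · exact (Set.toFinite _).bddAbove
    · exact ⟨(s, t), rfl⟩
  obtain ⟨k1, hk1, Q1, htQ1, hQ1conn, hQ1card, hplan1⟩ :=
    phase1 hG t (graphDiam G) S hS hScard s hs hdiam
  obtain ⟨k2, hk2, hplan2⟩ := phase2 hT hTcard (n - 1) {t}
    ⟨t, Finset.mem_singleton_self t⟩ (Finset.singleton_subset_iff.2 ht)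
    (connSet_singleton t) (by rw [Finset.card_singleton]; omega)
    Q1 hQ1conn hQ1card (Finset.singleton_subset_iff.2 htQ1)
  obtain ⟨P, hP⟩ := plannable_trans hplan1 hplan2
  exact ⟨k1 + k2, P, hP, by omega⟩
end

section
/- Let G = (V,E) be a finite, simple, undirected, connected graph, and let Q, T ⊆ V be connected vertex sets with |Q| = |T| = n and Q ∩ T ≠ ∅. Let p be the number of vertices of a largest connected component of the induced subgraph G[Q ∩ T]. Then there exists a valid plan from Q to T with makespan at most n − p; in particular, with makespan at most n − 1. -/
open SimpleGraph

variable {V : Type*}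

/-- The number of vertices of a largest connected component of the induced
subgraph `G[W]`. -/
noncomputable def maxCompCard (G : SimpleGraph V) (W : Finset V) : ℕ :=
  sSup (Set.range
    fun C : (G.induce (W : Set V)).ConnectedComponent => Nat.card C.supp)

section Aux
variable {G : SimpleGraph V}


/-- Hom from induced graph to ambient graph. -/
def valHom (G : SimpleGraph V) (s : Set V) : G.induce s →g G :=
  ⟨Subtype.val, fun {a b} h => h⟩

lemma walk_in_set {s : Set V} {u v : s} (w : (G.induce s).Walk u v) :
    ∃ w' : G.Walk (u : V) (v : V), ∀ x ∈ w'.support, ∃ hx : x ∈ s, ⟨x, hx⟩ ∈ w.support := by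
  refine ⟨w.map (valHom G s), ?_⟩
  intro x hx
  replace hx : x ∈ w.support.map (valHom G s) := by rw [← Walk.support_map]; exact hx
  rw [List.mem_map] at hx
  obtain ⟨y, hy, rfl⟩ := hx
  exact ⟨y.2, hy⟩

/-- Build an induced walk from an ambient walk whose support lies in `s`. -/
def Walk.induceUp {s : Set V} : ∀ {u v : V} (w : G.Walk u v)
    (_hs : ∀ x ∈ w.support, x ∈ s),
    (G.induce s).Walk ⟨u, _hs u w.start_mem_support⟩ ⟨v, _hs v w.end_mem_support⟩
  | _, _, SimpleGraph.Walk.nil, _ => SimpleGraph.Walk.nil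
  | u, v, SimpleGraph.Walk.cons h w, hs =>
      SimpleGraph.Walk.cons (by exact h)
        (Walk.induceUp w (fun x hx => hs x (by simp [Walk.support_cons, hx])))

lemma reach_up {s : Set V} {u v : V} (w : G.Walk u v) (hs : ∀ x ∈ w.support, x ∈ s) :
    (G.induce s).Reachable ⟨u, hs u w.start_mem_support⟩ ⟨v, hs v w.end_mem_support⟩ :=
  ⟨Walk.induceUp w hs⟩

lemma connSet_reach [DecidableEq V] {A : Finset V} (hA : ConnSet G A) {u v : V}
    (hu : u ∈ A) (hv : v ∈ A) :
    ∃ w : G.Walk u v, ∀ x ∈ w.support, x ∈ A := by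
  obtain ⟨w⟩ := hA.preconnected ⟨u, by exact hu⟩ ⟨v, by exact hv⟩
  obtain ⟨w', hw'⟩ := walk_in_set w
  exact ⟨w', fun x hx => (hw' x hx).1⟩

lemma connSet_of_walks_to [DecidableEq V] {A : Finset V} {r : V} (hr : r ∈ A)
    (h : ∀ u ∈ A, ∃ w : G.Walk u r, ∀ x ∈ w.support, x ∈ A) : ConnSet G A := by
  rw [ConnSet, connected_iff]
  constructor
  · intro u v
    obtain ⟨wu, hwu⟩ := h u u.2
    obtain ⟨wv, hwv⟩ := h v v.2
    have : ∀ x ∈ (wu.append wv.reverse).support, x ∈ (A : Set V) := by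
      intro x hx
      rcases (Walk.mem_support_append_iff _ _).1 hx with h1 | h1
      · exact hwu x h1
      · rw [Walk.support_reverse, List.mem_reverse] at h1
        exact hwv x h1
    have := reach_up (wu.append wv.reverse) this
    exact this
  · exact ⟨⟨r, hr⟩⟩

lemma connSet_insert_s10 [DecidableEq V] {A : Finset V} (hA : ConnSet G A) {a t : V}
    (ha : a ∈ A) (hadj : G.Adj a t) : ConnSet G (insert t A) := by
  have key : ∀ u ∈ insert t A, ∃ w : G.Walk u a, ∀ x ∈ w.support, x ∈ insert t A := by
    intro u hu
    rcases Finset.mem_insert.1 hu with rfl | hu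
    · exact ⟨Walk.cons hadj.symm Walk.nil, by
        intro x hx
        simp only [Walk.support_cons, Walk.support_nil, List.mem_cons, List.mem_singleton] at hx
        rcases hx with rfl | rfl | h
        · exact Finset.mem_insert_self _ _
        · exact Finset.mem_insert_of_mem ha
        · simp at h⟩
    · obtain ⟨w, hw⟩ := connSet_reach hA hu ha
      exact ⟨w, fun x hx => Finset.mem_insert_of_mem (hw x hx)⟩
  obtain ⟨w, hw⟩ := key a (Finset.mem_insert_of_mem ha)
  exact connSet_of_walks_to (Finset.mem_insert_of_mem ha) key

lemma exit_of_walk [DecidableEq V] {A T : Finset V} :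
    ∀ {x y : V} (w : G.Walk x y), x ∈ A → y ∉ A → (∀ z ∈ w.support, z ∈ T) →
      ∃ t ∈ T, t ∉ A ∧ ∃ a ∈ A, G.Adj a t := by
  intro x y w
  induction w with
  | nil => intro hx hy _; exact absurd hx hy
  | cons h w ih =>
    rename_i u v z
    intro hx hy hT
    by_cases hv : v ∈ A
    · exact ih hv hy (fun z hz => hT z (by simp [Walk.support_cons, hz]))
    · exact ⟨v, hT v (by simp [Walk.support_cons]), hv, u, hx, h⟩

lemma exists_boundary [DecidableEq V] {A T : Finset V} (hT : ConnSet G T)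
    (hAT : A ⊆ T) (hA : A.Nonempty) (hne : A ≠ T) :
    ∃ t ∈ T, t ∉ A ∧ ∃ a ∈ A, G.Adj a t := by
  obtain ⟨a0, ha0⟩ := hA
  obtain ⟨t0, ht0T, ht0A⟩ := Finset.exists_of_ssubset (hAT.ssubset_of_ne hne)
  obtain ⟨w, hw⟩ := connSet_reach hT (hAT ha0) ht0T
  exact exit_of_walk w ha0 ht0A hw

lemma exists_noncut_s10 [DecidableEq V] {A Q' : Finset V} (hQ : ConnSet G Q')
    (hA : ConnSet G A) (hAQ : A ⊆ Q') (hAne : A.Nonempty) (hne : A ≠ Q') :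
    ∃ ℓ ∈ Q', ℓ ∉ A ∧ ConnSet G (Q'.erase ℓ) := by
  obtain ⟨r, hr⟩ := hAne
  have hrQ : r ∈ Q' := hAQ hr
  set H := G.induce (Q' : Set V) with hH
  let f : V → ℕ := fun v => if h : v ∈ Q' then H.dist ⟨r, hrQ⟩ ⟨v, h⟩ else 0
  have hSne : (Q' \ A).Nonempty := by
    rw [Finset.sdiff_nonempty]
    intro hsub
    exact hne (Finset.Subset.antisymm hAQ hsub)
  obtain ⟨ℓ, hℓS, hmax⟩ := Finset.exists_max_image (Q' \ A) f hSne
  obtain ⟨hℓQ, hℓA⟩ := Finset.mem_sdiff.1 hℓS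
  refine ⟨ℓ, hℓQ, hℓA, ?_⟩
  have hrE : r ∈ Q'.erase ℓ := Finset.mem_erase.2 ⟨fun e => hℓA (e ▸ hr), hrQ⟩
  apply connSet_of_walks_to hrE
  intro u hu
  have huQ : u ∈ Q' := Finset.mem_of_mem_erase hu
  have hune : u ≠ ℓ := Finset.ne_of_mem_erase hu
  by_cases huA : u ∈ A
  · obtain ⟨w, hw⟩ := connSet_reach hA huA hr
    exact ⟨w, fun x hx => Finset.mem_erase.2
      ⟨fun e => hℓA (e ▸ hw x hx), hAQ (hw x hx)⟩⟩
  · have hreach : H.Reachable ⟨u, huQ⟩ ⟨r, hrQ⟩ := hQ.preconnected _ _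
    obtain ⟨p, hp⟩ := hreach.exists_walk_length_eq_dist
    have hℓnot : (⟨ℓ, hℓQ⟩ : (Q' : Set V)) ∉ p.support := by
      intro hmem
      have h1 : 1 ≤ (p.takeUntil _ hmem).length := by
        rcases Nat.eq_zero_or_pos (p.takeUntil _ hmem).length with h0 | h0
        · have := Walk.eq_of_length_eq_zero h0
          exact absurd (congrArg Subtype.val this) hune
        · exact h0
      have h2 : H.dist ⟨ℓ, hℓQ⟩ ⟨r, hrQ⟩ ≤ (p.dropUntil _ hmem).length :=
        SimpleGraph.dist_le _
      have h3 : (p.takeUntil _ hmem).length + (p.dropUntil _ hmem).length = p.length := by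
        rw [← Walk.length_append, Walk.take_spec]
      have hmaxu : H.dist ⟨r, hrQ⟩ ⟨u, huQ⟩ ≤ H.dist ⟨r, hrQ⟩ ⟨ℓ, hℓQ⟩ := by
        have := hmax u (Finset.mem_sdiff.2 ⟨huQ, huA⟩)
        simpa [f, huQ, hℓQ] using this
      rw [SimpleGraph.dist_comm] at hmaxu
      rw [SimpleGraph.dist_comm (u := (⟨ℓ, hℓQ⟩ : (Q' : Set V)))] at h2
      have hpl : p.length = H.dist ⟨u, huQ⟩ ⟨r, hrQ⟩ := hp
      rw [SimpleGraph.dist_comm] at hpl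
      omega
    obtain ⟨w', hw'⟩ := walk_in_set p
    refine ⟨w', fun x hx => ?_⟩
    obtain ⟨hxQ, hxsup⟩ := hw' x hx
    refine Finset.mem_erase.2 ⟨fun e => ?_, hxQ⟩
    subst e
    exact hℓnot (by exact hxsup)

lemma onestep_refl (G : SimpleGraph V) (Q : Finset V) : OneStep G Q Q := by
  refine ⟨Equiv.refl _, fun v => Or.inl rfl, fun u v huv h => huv (h.1 ▸ rfl)⟩

lemma onestep_chain [DecidableEq V] {Q : Finset V} {ℓ t : V} (hℓ : ℓ ∈ Q) (ht : t ∉ Q)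
    (w : G.Walk ℓ t) (hpath : w.IsPath) (hsupp : ∀ x ∈ w.support, x ∈ insert t Q) :
    OneStep G Q (insert t (Q.erase ℓ)) := by
  classical
  set L := w.support with hL
  have hnodup : L.Nodup := hpath.support_nodup
  have hLlen : 0 < L.length := by simp [hL]
  have hhead : L[0]'hLlen = ℓ := by
    have := w.head_support
    rwa [List.head_eq_getElem] at this
  have hlast : L[L.length - 1]'(by omega) = t := by
    have := w.getLast_support
    rwa [List.getLast_eq_getElem] at this
  set σ := L.formPerm with hσ
  -- index facts
  have hidx : ∀ v ∈ Q, v ∈ L → ∃ i : ℕ, ∃ hi : i + 1 < L.length,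
      L[i]'(by omega) = v ∧ σ v = L[i + 1]'hi := by
    intro v hv hvL
    obtain ⟨i, hi, hgv⟩ : ∃ i, ∃ h : i < L.length, L[i] = v :=
      ⟨L.idxOf v, List.idxOf_lt_length_iff.2 hvL, List.getElem_idxOf _⟩
    have hvne : v ≠ t := fun e => ht (e ▸ hv)
    have hi1 : i + 1 < L.length := by
      rcases Nat.lt_or_ge (i + 1) L.length with h | h
      · exact h
      · exfalso
        have hieq : i = L.length - 1 := by omega
        subst hieq
        exact hvne (hgv ▸ hlast ▸ rfl)
    refine ⟨i, hi1, hgv, ?_⟩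
    have h2 := List.formPerm_apply_getElem L hnodup i hi
    rw [hgv] at h2
    simp only [Nat.mod_eq_of_lt hi1] at h2
    exact h2
  have hmem1 : ∀ v ∈ Q, σ v ∈ insert t (Q.erase ℓ) := by
    intro v hv
    by_cases hvL : v ∈ L
    · obtain ⟨i, hi, hgv, hσv⟩ := hidx v hv hvL
      rw [hσv]
      have hmem : L[i + 1] ∈ insert t Q := hsupp _ (List.getElem_mem _)
      rcases Finset.mem_insert.1 hmem with h | h
      · exact h ▸ Finset.mem_insert_self _ _
      · refine Finset.mem_insert_of_mem (Finset.mem_erase.2 ⟨?_, h⟩)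
        intro e
        have : L[i + 1]'hi = L[0]'hLlen := by rw [e, hhead]
        rw [hnodup.getElem_inj_iff] at this
        omega
    · rw [hσ, List.formPerm_apply_of_notMem hvL]
      refine Finset.mem_insert_of_mem (Finset.mem_erase.2 ⟨?_, hv⟩)
      intro e
      exact hvL (e ▸ (by rw [hL]; exact w.start_mem_support))
  -- the map
  have hcard : (insert t (Q.erase ℓ)).card = Q.card := by
    rw [Finset.card_insert_of_notMem (fun h => ht (Finset.mem_of_mem_erase h)),
      Finset.card_erase_of_mem hℓ]
    have : 0 < Q.card := Finset.card_pos.2 ⟨ℓ, hℓ⟩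
    omega
  let f : {x // x ∈ Q} → {x // x ∈ insert t (Q.erase ℓ)} :=
    fun x => ⟨σ x, hmem1 x x.2⟩
  have hfinj : Function.Injective f := by
    intro a b hab
    have : σ (a : V) = σ (b : V) := congrArg Subtype.val hab
    exact Subtype.ext (σ.injective this)
  have hfbij : Function.Bijective f := by
    rw [Fintype.bijective_iff_injective_and_card]
    refine ⟨hfinj, by simp [Fintype.card_coe, hcard]⟩
  refine ⟨Equiv.ofBijective f hfbij, ?_, ?_⟩
  · intro v
    by_cases hvL : (v : V) ∈ L
    · obtain ⟨i, hi, hgv, hσv⟩ := hidx v v.2 hvL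
      right
      have hadj : G.Adj (L[i]'(by omega)) (L[i + 1]'hi) := by
        have hc : List.IsChain G.Adj L := by rw [hL]; exact w.isChain_adj_support
        have := List.isChain_iff_getElem.1 hc i (by omega)
        simpa using this
      have : (Equiv.ofBijective f hfbij v : V) = σ v := rfl
      rw [this, hσv, ← hgv]
      exact hadj
    · left
      have : (Equiv.ofBijective f hfbij v : V) = σ v := rfl
      rw [this, hσ, List.formPerm_apply_of_notMem hvL]
  · intro u v huv h
    obtain ⟨h1, h2⟩ := h
    have h1' : σ (u : V) = (v : V) := h1
    have h2' : σ (v : V) = (u : V) := h2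
    by_cases huL : (u : V) ∈ L
    · obtain ⟨i, hi, hgu, hσu⟩ := hidx u u.2 huL
      have hvL : (v : V) ∈ L := by
        rw [← h1', hσu]
        exact List.getElem_mem _
      obtain ⟨j, hj, hgv, hσv⟩ := hidx v v.2 hvL
      -- v = L[i+1], v = L[j] so j = i+1 ; u = L[j+1] = L[i]
      have hji : j = i + 1 := by
        have : L[j]'(by omega) = L[i + 1]'hi := by rw [hgv, ← h1', hσu]
        rwa [hnodup.getElem_inj_iff] at this
      have : L[j + 1]'hj = L[i]'(by omega) := by rw [← hσv, h2', ← hgu]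
      rw [hnodup.getElem_inj_iff] at this
      omega
    · rw [hσ, List.formPerm_apply_of_notMem huL] at h1'
      exact huv h1'

lemma walk_support_comp {α : Type*} {H : SimpleGraph α} {u v : α} (p : H.Walk u v) :
    ∀ z ∈ p.support, H.connectedComponentMk z = H.connectedComponentMk u := by
  induction p with
  | nil =>
    intro z hz
    simp only [Walk.support_nil, List.mem_singleton] at hz
    subst hz; rfl
  | cons h q ih =>
    intro z hz
    rw [Walk.support_cons, List.mem_cons] at hz
    rcases hz with rfl | hz
    · rfl
    · rw [ih z hz]
      exact (ConnectedComponent.connectedComponentMk_eq_of_adj h).symm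

lemma exists_largest_comp [Fintype V] [DecidableEq V] (G : SimpleGraph V)
    (W : Finset V) (hW : W.Nonempty) :
    ∃ C : Finset V, C ⊆ W ∧ C.Nonempty ∧ ConnSet G C ∧ C.card = maxCompCard G W := by
  classical
  set H := G.induce (W : Set V) with hH
  obtain ⟨w0, hw0⟩ := hW
  set f : H.ConnectedComponent → ℕ := fun C => Nat.card C.supp with hf
  have hne : (Set.range f).Nonempty :=
    ⟨f (H.connectedComponentMk ⟨w0, hw0⟩), Set.mem_range_self _⟩
  have hbdd : BddAbove (Set.range f) := (Set.finite_range f).bddAbove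
  have hmem := Nat.sSup_mem hne hbdd
  obtain ⟨C, hC⟩ := hmem
  have hsfin : (Subtype.val '' C.supp : Set V).Finite := Set.toFinite _
  refine ⟨hsfin.toFinset, ?_, ?_, ?_, ?_⟩
  · intro x hx
    rw [Set.Finite.mem_toFinset] at hx
    obtain ⟨y, _, rfl⟩ := hx
    exact y.2
  · obtain ⟨x, hx⟩ := C.exists_rep
    refine ⟨x, ?_⟩
    rw [Set.Finite.mem_toFinset]
    exact ⟨x, by rw [ConnectedComponent.mem_supp_iff]; exact hx, rfl⟩
  · -- connectivity
    obtain ⟨x, hx⟩ := C.exists_rep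
    have hxW : (x : V) ∈ W := x.2
    have hxC : (x : V) ∈ hsfin.toFinset := by
      rw [Set.Finite.mem_toFinset]
      exact ⟨x, by rw [ConnectedComponent.mem_supp_iff]; exact hx, rfl⟩
    apply connSet_of_walks_to hxC
    intro u hu
    rw [Set.Finite.mem_toFinset] at hu
    obtain ⟨y, hy, rfl⟩ := hu
    rw [ConnectedComponent.mem_supp_iff] at hy
    have hreach : H.Reachable y x := by
      rw [← ConnectedComponent.eq, hy]; exact hx.symm
    obtain ⟨p⟩ := hreach
    obtain ⟨w', hw'⟩ := walk_in_set p
    refine ⟨w', fun z hz => ?_⟩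
    obtain ⟨hzW, hzsup⟩ := hw' z hz
    rw [Set.Finite.mem_toFinset]
    refine ⟨⟨z, hzW⟩, ?_, rfl⟩
    rw [ConnectedComponent.mem_supp_iff, walk_support_comp p _ hzsup, hy]
  · rw [← Set.ncard_eq_toFinset_card _ hsfin, ← Nat.card_coe_set_eq,
      Nat.card_image_of_injective Subtype.val_injective]
    exact hC

lemma main_ind [Fintype V] [DecidableEq V] {G : SimpleGraph V} {n : ℕ} {T : Finset V}
    (hTconn : ConnSet G T) (hTcard : T.card = n) :
    ∀ m (Q A : Finset V), (T \ A).card = m → A ⊆ T → A ⊆ Q → A.Nonempty →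
      ConnSet G A → ConnSet G Q → Q.card = n →
      ∃ tstar ≤ m, ∃ P : ℕ → Finset V, ValidPlan G n Q T tstar P := by
  intro m
  induction m with
  | zero =>
    intro Q A hm hAT hAQ _ _ hQconn hQcard
    have hTA : T ⊆ A := by
      rwa [← Finset.sdiff_eq_empty_iff_subset, ← Finset.card_eq_zero]
    have hAeq : A = T := Finset.Subset.antisymm hAT hTA
    subst hAeq
    have hQT : Q = A := (Finset.eq_of_subset_of_card_le hAQ (by omega)).symm
    subst hQT
    exact ⟨0, le_refl _, fun _ => Q, rfl, rfl,
      fun k _ => ⟨hQcard, hQconn⟩, fun k hk => absurd hk (by omega)⟩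
  | succ m ih =>
    intro Q A hm hAT hAQ hAne hAconn hQconn hQcard
    have hne : A ≠ T := by
      intro e; subst e; rw [Finset.sdiff_self] at hm; simp at hm
    obtain ⟨t, htT, htA, a, haA, hadj⟩ := exists_boundary hTconn hAT hAne hne
    set A' := insert t A with hA'
    have hA'conn : ConnSet G A' := connSet_insert_s10 hAconn haA hadj
    have hA'T : A' ⊆ T := Finset.insert_subset htT hAT
    have hm' : (T \ A').card = m := by
      rw [hA', Finset.sdiff_insert, Finset.card_erase_of_mem
        (Finset.mem_sdiff.2 ⟨htT, htA⟩), hm]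
      omega
    by_cases htQ : t ∈ Q
    · obtain ⟨ts, hts, P, hP⟩ := ih Q A' hm' hA'T
        (Finset.insert_subset htQ hAQ) ⟨t, Finset.mem_insert_self _ _⟩
        hA'conn hQconn hQcard
      exact ⟨ts, le_trans hts (Nat.le_succ _), P, hP⟩
    · set Q'' := insert t Q with hQ''
      have hQ''conn : ConnSet G Q'' := connSet_insert_s10 hQconn (hAQ haA) hadj
      have hA'Q'' : A' ⊆ Q'' := Finset.insert_subset_insert _ hAQ
      have hQ''card : Q''.card = n + 1 := by
        rw [hQ'', Finset.card_insert_of_notMem htQ, hQcard]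
      have hA'ne : A' ≠ Q'' := by
        intro e
        have h1 : A'.card ≤ n := hTcard ▸ Finset.card_le_card hA'T
        rw [e, hQ''card] at h1; omega
      obtain ⟨ℓ, hℓQ'', hℓA', hQ₁conn⟩ := exists_noncut_s10 hQ''conn hA'conn hA'Q''
        ⟨t, Finset.mem_insert_self _ _⟩ hA'ne
      have hℓt : ℓ ≠ t := fun e => hℓA' (e ▸ Finset.mem_insert_self _ _)
      have hℓQ : ℓ ∈ Q := by
        rcases Finset.mem_insert.1 hℓQ'' with e | h
        · exact absurd e hℓt
        · exact h
      set Q₁ := Q''.erase ℓ with hQ₁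
      have hQ₁eq : Q₁ = insert t (Q.erase ℓ) := by
        rw [hQ₁, hQ'', Finset.erase_insert_of_ne hℓt.symm]
      have hQ₁card : Q₁.card = n := by
        rw [hQ₁, Finset.card_erase_of_mem hℓQ'', hQ''card]
        omega
      -- one step from Q to Q₁
      obtain ⟨w, hw⟩ := connSet_reach hQ''conn (Finset.mem_insert_of_mem hℓQ)
        (Finset.mem_insert_self t Q)
      have hstep : OneStep G Q (insert t (Q.erase ℓ)) :=
        onestep_chain hℓQ htQ w.bypass w.bypass_isPath
          (fun x hx => hw x (w.support_bypass_subset hx))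
      rw [← hQ₁eq] at hstep
      have hA'Q₁ : A' ⊆ Q₁ := fun x hx =>
        Finset.mem_erase.2 ⟨fun e => hℓA' (e ▸ hx), hA'Q'' hx⟩
      obtain ⟨ts, hts, P', hP'⟩ := ih Q₁ A' hm' hA'T hA'Q₁
        ⟨t, Finset.mem_insert_self _ _⟩ hA'conn hQ₁conn hQ₁card
      obtain ⟨hP0, hPT, hPcc, hPstep⟩ := hP'
      refine ⟨ts + 1, Nat.succ_le_succ hts,
        fun k => match k with | 0 => Q | (k+1) => P' k, rfl, hPT, ?_, ?_⟩
      · intro k hk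
        cases k with
        | zero => exact ⟨hQcard, hQconn⟩
        | succ k => exact hPcc k (Nat.le_of_succ_le_succ hk)
      · intro k hk
        cases k with
        | zero =>
          show OneStep G Q (P' 0)
          rw [hP0]; exact hstep
        | succ k => exact hPstep k (Nat.lt_of_succ_lt_succ hk)


end Aux

/-- If `Q` and `T` are connected vertex sets of size `n` with `Q ∩ T ≠ ∅`, and
`p` is the size of a largest connected component of `G[Q ∩ T]`, then there is a
valid plan from `Q` to `T` with makespan at most `n - p`, in particular at most
`n - 1`. -/
theorem stmt10 [Fintype V] [DecidableEq V] (G : SimpleGraph V) (hG : G.Connected)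
    (n : ℕ) (Q T : Finset V)
    (hQconn : ConnSet G Q) (hTconn : ConnSet G T)
    (hQcard : Q.card = n) (hTcard : T.card = n)
    (hint : (Q ∩ T).Nonempty) :
    ∃ (tstar : ℕ) (P : ℕ → Finset V), ValidPlan G n Q T tstar P ∧
      tstar ≤ n - maxCompCard G (Q ∩ T) ∧ tstar ≤ n - 1 := by
  obtain ⟨C, hCW, hCne, hCconn, hCcard⟩ := exists_largest_comp G (Q ∩ T) hint
  have hCT : C ⊆ T := hCW.trans Finset.inter_subset_right
  have hCQ : C ⊆ Q := hCW.trans Finset.inter_subset_left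
  obtain ⟨ts, hts, P, hP⟩ := main_ind hTconn hTcard (T \ C).card Q C rfl hCT hCQ
    hCne hCconn hQconn hQcard
  have hcard : (T \ C).card = n - maxCompCard G (Q ∩ T) := by
    rw [Finset.card_sdiff_of_subset hCT, hTcard, hCcard]
  have hp1 : 1 ≤ maxCompCard G (Q ∩ T) := by
    rw [← hCcard]
    exact Finset.card_pos.2 hCne
  refine ⟨ts, P, hP, by omega, by omega⟩
end
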